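/- Let Ξ, K, Π be invertible n×n complex matrices, U an m×n and V an n×m complex matrix, and assume Ξ⁻¹ − K Ξ K is invertible. Set Ξ' = Π Ξ⁻¹ Π⁻¹, K' = Π K⁻¹ Π⁻¹, U' = −U K⁻¹ Π⁻¹, V' = Π K⁻¹ V. Then Ξ'⁻¹ − K' Ξ' K' is invertible and the reflection transformation leaves the solution formulas invariant up to a constant: U' (Ξ'⁻¹ − K' Ξ' K')⁻¹ V' = U (Ξ⁻¹ − K Ξ K)⁻¹ V, and U' Ξ' K' (Ξ'⁻¹ − K' Ξ' K')⁻¹ V' = U Ξ K (Ξ⁻¹ − K Ξ K)⁻¹ V + U K⁻¹ V. -/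

import Mathlib

open Matrix

/-- The reflection transformation leaves the solution formulas invariant
(up to an additive constant for the second one). -/
theorem reflection_symmetry_invariance
    {n m : ℕ}
    (Ξ K P : Matrix (Fin n) (Fin n) ℂ)
    (hΞ : IsUnit Ξ) (hK : IsUnit K) (hP : IsUnit P)
    (U : Matrix (Fin m) (Fin n) ℂ) (V : Matrix (Fin n) (Fin m) ℂ)
    (hinv : IsUnit (Ξ⁻¹ - K * Ξ * K))
    (Ξ' K' : Matrix (Fin n) (Fin n) ℂ)
    (U' : Matrix (Fin m) (Fin n) ℂ) (V' : Matrix (Fin n) (Fin m) ℂ)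
    (hΞ' : Ξ' = P * Ξ⁻¹ * P⁻¹)
    (hK' : K' = P * K⁻¹ * P⁻¹)
    (hU' : U' = -(U * K⁻¹ * P⁻¹))
    (hV' : V' = P * K⁻¹ * V) :
    IsUnit (Ξ'⁻¹ - K' * Ξ' * K') ∧
    U' * (Ξ'⁻¹ - K' * Ξ' * K')⁻¹ * V' = U * (Ξ⁻¹ - K * Ξ * K)⁻¹ * V ∧
    U' * Ξ' * K' * (Ξ'⁻¹ - K' * Ξ' * K')⁻¹ * V'
      = U * Ξ * K * (Ξ⁻¹ - K * Ξ * K)⁻¹ * V + U * K⁻¹ * V := by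
  set S := Ξ⁻¹ - K * Ξ * K with hS
  have hΞd := (Matrix.isUnit_iff_isUnit_det Ξ).mp hΞ
  have hKd := (Matrix.isUnit_iff_isUnit_det K).mp hK
  have hPd := (Matrix.isUnit_iff_isUnit_det P).mp hP
  have hSd := (Matrix.isUnit_iff_isUnit_det S).mp hinv
  have hΞ1 : Ξ⁻¹ * Ξ = 1 := Matrix.nonsing_inv_mul Ξ hΞd
  have hΞ2 : Ξ * Ξ⁻¹ = 1 := Matrix.mul_nonsing_inv Ξ hΞd
  have hK1 : K⁻¹ * K = 1 := Matrix.nonsing_inv_mul K hKd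
  have hK2 : K * K⁻¹ = 1 := Matrix.mul_nonsing_inv K hKd
  have hP1 : P⁻¹ * P = 1 := Matrix.nonsing_inv_mul P hPd
  have hP2 : P * P⁻¹ = 1 := Matrix.mul_nonsing_inv P hPd
  have hS1 : S⁻¹ * S = 1 := Matrix.nonsing_inv_mul S hSd
  have hS2 : S * S⁻¹ = 1 := Matrix.mul_nonsing_inv S hSd
  -- cancellation lemmas
  have cΞ1 : ∀ {p} (X : Matrix (Fin n) (Fin p) ℂ), Ξ⁻¹ * (Ξ * X) = X := by
    intro p X; rw [← Matrix.mul_assoc, hΞ1, Matrix.one_mul]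
  have cΞ2 : ∀ {p} (X : Matrix (Fin n) (Fin p) ℂ), Ξ * (Ξ⁻¹ * X) = X := by
    intro p X; rw [← Matrix.mul_assoc, hΞ2, Matrix.one_mul]
  have cK1 : ∀ {p} (X : Matrix (Fin n) (Fin p) ℂ), K⁻¹ * (K * X) = X := by
    intro p X; rw [← Matrix.mul_assoc, hK1, Matrix.one_mul]
  have cK2 : ∀ {p} (X : Matrix (Fin n) (Fin p) ℂ), K * (K⁻¹ * X) = X := by
    intro p X; rw [← Matrix.mul_assoc, hK2, Matrix.one_mul]
  have cP1 : ∀ {p} (X : Matrix (Fin n) (Fin p) ℂ), P⁻¹ * (P * X) = X := by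
    intro p X; rw [← Matrix.mul_assoc, hP1, Matrix.one_mul]
  have cP2 : ∀ {p} (X : Matrix (Fin n) (Fin p) ℂ), P * (P⁻¹ * X) = X := by
    intro p X; rw [← Matrix.mul_assoc, hP2, Matrix.one_mul]
  have cS1 : ∀ {p} (X : Matrix (Fin n) (Fin p) ℂ), S⁻¹ * (S * X) = X := by
    intro p X; rw [← Matrix.mul_assoc, hS1, Matrix.one_mul]
  have cS2 : ∀ {p} (X : Matrix (Fin n) (Fin p) ℂ), S * (S⁻¹ * X) = X := by
    intro p X; rw [← Matrix.mul_assoc, hS2, Matrix.one_mul]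
  -- Ξ'⁻¹ = P * Ξ * P⁻¹
  have hXi'inv : Ξ'⁻¹ = P * Ξ * P⁻¹ := by
    apply Matrix.inv_eq_left_inv
    rw [hΞ']
    simp only [Matrix.mul_assoc, cP1, cΞ2]
    rw [hP2]
  -- M = -(P * (K⁻¹ * (S * (K⁻¹ * P⁻¹))))
  have hM : Ξ'⁻¹ - K' * Ξ' * K' = -(P * (K⁻¹ * (S * (K⁻¹ * P⁻¹)))) := by
    rw [hXi'inv, hK', hΞ', hS]
    simp only [Matrix.mul_assoc, cP1, cK2, cΞ2]
    rw [Matrix.sub_mul, Matrix.mul_sub, Matrix.mul_sub]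
    simp only [Matrix.mul_assoc, cP1, cK2, cΞ1, cΞ2, cK1]
    rw [neg_sub]
  have hMU : IsUnit (Ξ'⁻¹ - K' * Ξ' * K') := by
    apply (Matrix.isUnit_iff_isUnit_det _).mpr
    apply Matrix.isUnit_det_of_right_inverse (B := (-(P * (K * (S⁻¹ * (K * P⁻¹))))))
    rw [hM, Matrix.neg_mul, Matrix.mul_neg, neg_neg]
    simp only [Matrix.mul_assoc, cP1, cK2, cS2, cK1, cK2]
    rw [hP2]
  have hMinv : (Ξ'⁻¹ - K' * Ξ' * K')⁻¹ = -(P * (K * (S⁻¹ * (K * P⁻¹)))) := by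
    apply Matrix.inv_eq_left_inv
    rw [hM, Matrix.neg_mul, Matrix.mul_neg, neg_neg]
    simp only [Matrix.mul_assoc, cP1, cK2, cS1, cK1]
    rw [hP2]
  refine ⟨hMU, ?_, ?_⟩
  · rw [hMinv, hU', hV']
    simp only [Matrix.neg_mul, Matrix.mul_neg, neg_neg, Matrix.mul_assoc, cP1, cK1, cK2]
  · rw [hMinv, hU', hV', hΞ', hK']
    simp only [Matrix.neg_mul, Matrix.mul_neg, neg_neg, Matrix.mul_assoc, cP1, cK1, cK2]
    have key : K⁻¹ * (Ξ⁻¹ * (S⁻¹ * V)) = Ξ * (K * (S⁻¹ * V)) + K⁻¹ * V := by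
      have h0 : K⁻¹ * V = K⁻¹ * (S * (S⁻¹ * V)) := by rw [cS2]
      rw [h0, hS, Matrix.sub_mul, Matrix.mul_sub]
      simp only [Matrix.mul_assoc, cK1]
      abel
    rw [key, Matrix.mul_add]
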